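/- arXiv:1804.02945 — 2 statements merged into one kernel-verified Lean document; each statement's English description precedes it below -/
import Mathlib

section
/- Let h(z) = z/(1−z) and g(z) = log(1−z) − z/(1−z) (principal branch of the logarithm) on the unit disk 𝔻, and let f = h + conj(g), i.e. f(z) = z/(1−z) − conj(z/(1−z) − log(1−z)). Then h and g are each normal (as harmonic mappings with zero anti-analytic part), but f is not normal: ‖f‖_n = ∞. -/
open Complex Metric Set ENNReal Filter

noncomputable section

/-- The open unit disk in the complex plane. -/
def unitDisk : Set ℂ := Metric.ball (0 : ℂ) 1

notation "𝔻" => unitDisk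

/-- The chordal distance on ℂ. -/
def chordal (z w : ℂ) : ℝ :=
  ‖z - w‖ /
    (Real.sqrt (1 + ‖z‖ ^ 2) * Real.sqrt (1 + ‖w‖ ^ 2))

/-- The hyperbolic distance on the unit disk. -/
def hypDist (z w : ℂ) : ℝ :=
  (1 / 2) * Real.log
    ((1 + ‖(z - w) / (1 - (starRingEnd ℂ) z * w)‖) /
     (1 - ‖(z - w) / (1 - (starRingEnd ℂ) z * w)‖))

/-- The harmonic mapping `f = h + conj g`. -/
def harmMap (h g : ℂ → ℂ) : ℂ → ℂ := fun z => h z + (starRingEnd ℂ) (g z)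

/-- The quantity `(1 - |z|²) (|h'(z)| + |g'(z)|) / (1 + |f(z)|²)` for `f = h + conj g`. -/
def nQuot (h g : ℂ → ℂ) (z : ℂ) : ℝ :=
  (1 - ‖z‖ ^ 2) * (‖deriv h z‖ + ‖deriv g z‖) /
    (1 + ‖harmMap h g z‖ ^ 2)

/-- `‖f‖ₙ`, the normality norm of the harmonic mapping `f = h + conj g`,
as an element of `[0, ∞]`. -/
def harmNorm (h g : ℂ → ℂ) : ℝ≥0∞ :=
  ⨆ z ∈ 𝔻, ENNReal.ofReal (nQuot h g z)

/-- `φ` is a conformal automorphism of the unit disk. -/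
def IsDiskAut (φ : ℂ → ℂ) : Prop :=
  DifferentiableOn ℂ φ 𝔻 ∧ Set.MapsTo φ 𝔻 𝔻 ∧
    ∃ ψ : ℂ → ℂ, DifferentiableOn ℂ ψ 𝔻 ∧ Set.MapsTo ψ 𝔻 𝔻 ∧
      (∀ z ∈ 𝔻, ψ (φ z) = z) ∧ (∀ z ∈ 𝔻, φ (ψ z) = z)



lemma abs_lt_one_of_mem {z : ℂ} (hz : z ∈ 𝔻) : ‖z‖ < 1 := by
  simpa [unitDisk] using mem_ball_zero_iff.mp hz

lemma one_sub_ne_zero {z : ℂ} (hz : ‖z‖ < 1) : (1 : ℂ) - z ≠ 0 := by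
  intro h
  have : z = 1 := by linear_combination -h
  simp [this] at hz

lemma hasDerivAt_h {z : ℂ} (hz : (1:ℂ) - z ≠ 0) :
    HasDerivAt (fun w : ℂ => w / (1 - w)) (1 / (1 - z) ^ 2) z := by
  have := (hasDerivAt_id z).div ((hasDerivAt_id z).const_sub 1) hz
  refine this.congr_deriv ?_
  simp only [id_eq]
  ring

lemma hasDerivAt_g {z : ℂ} (hz : ‖z‖ < 1) :
    HasDerivAt (fun w : ℂ => Complex.log (1 - w) - w / (1 - w)) (-(2 - z) / (1 - z) ^ 2) z := by
  have hne : (1:ℂ) - z ≠ 0 := one_sub_ne_zero hz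
  have hre : (0:ℝ) < (1 - z).re := by
    have := Complex.re_le_norm z
    simp only [Complex.sub_re, Complex.one_re]
    linarith
  have hslit : (1 : ℂ) - z ∈ Complex.slitPlane := Or.inl hre
  have hlog : HasDerivAt (fun w : ℂ => Complex.log (1 - w)) ((1 - z)⁻¹ * (-1)) z := by
    exact (Complex.hasDerivAt_log hslit).comp z ((hasDerivAt_id z).const_sub 1)
  have := hlog.sub (hasDerivAt_h hne)
  refine this.congr_deriv ?_
  field_simp
  ring



lemma part1_bound {z : ℂ} (hz : ‖z‖ < 1) :
    nQuot (fun w => w / (1 - w)) (fun _ => 0) z ≤ 2 := by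
  have hne : (1:ℂ) - z ≠ 0 := one_sub_ne_zero hz
  have hB : 0 < ‖1 - z‖ := by simpa using hne
  have hd : deriv (fun w : ℂ => w / (1 - w)) z = 1 / (1 - z) ^ 2 := (hasDerivAt_h hne).deriv
  set A := ‖z‖ with hA
  set B := ‖1 - z‖ with hBdef
  have h1 : B ^ 2 = (1 - z.re) ^ 2 + z.im ^ 2 := by
    rw [hBdef, Complex.sq_norm, Complex.normSq_apply]; simp; ring
  have h2 : A ^ 2 = z.re ^ 2 + z.im ^ 2 := by
    rw [hA, Complex.sq_norm, Complex.normSq_apply]; ring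
  have hx : z.re ≤ A := Complex.re_le_norm z
  simp only [nQuot, harmMap, hd, deriv_const', map_zero, norm_zero, add_zero, norm_div, norm_pow, norm_one]
  rw [div_le_iff₀ (by positivity)]
  rw [← hA, ← hBdef]
  have hB2 : B ≠ 0 := ne_of_gt hB
  field_simp
  nlinarith [sq_nonneg (5*A - 2), sq_nonneg (z.re - 2*A), sq_nonneg A, hB, sq_nonneg B, hz]

set_option maxHeartbeats 1000000 in
lemma part2_bound {z : ℂ} (hz : ‖z‖ < 1) :
    nQuot (fun w => Complex.log (1 - w) - w / (1 - w)) (fun _ => 0) z ≤ 30000 := by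
  have hne : (1:ℂ) - z ≠ 0 := one_sub_ne_zero hz
  have hB : 0 < ‖1 - z‖ := by simpa using hne
  have hd := (hasDerivAt_g hz).deriv
  set A := ‖z‖ with hA
  set B := ‖1 - z‖ with hBdef
  have hA0 : 0 ≤ A := norm_nonneg z
  have habs3 : ‖2 - z‖ ≤ 3 := by
    have h := norm_sub_le (2:ℂ) z
    have : ‖(2:ℂ)‖ = 2 := by simp
    rw [this] at h
    linarith
  have hder : ‖deriv (fun w => Complex.log (1 - w) - w / (1 - w)) z‖ ≤ 3 / B ^ 2 := by
    rw [hd, norm_div, norm_pow]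
    rw [show ‖-(2 - z)‖ = ‖2 - z‖ by
      rw [show -(2 - z) = z - 2 by ring]; exact norm_sub_rev z 2]
    rw [← hBdef]
    gcongr
  have hnum : (1 - A ^ 2) *
      (‖deriv (fun w => Complex.log (1 - w) - w / (1 - w)) z‖ + 0) ≤ 3 / B ^ 2 := by
    have h0 : 0 ≤ ‖deriv (fun w => Complex.log (1 - w) - w / (1 - w)) z‖ :=
      norm_nonneg _
    nlinarith [hder, sq_nonneg A, sq_nonneg B, hB]
  have hharm : harmMap (fun w => Complex.log (1 - w) - w / (1 - w)) (fun _ => 0) z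
      = Complex.log (1 - z) - z / (1 - z) := by simp [harmMap]
  set Gv := ‖Complex.log (1 - z) - z / (1 - z)‖ with hGvdef
  have hnq : nQuot (fun w => Complex.log (1 - w) - w / (1 - w)) (fun _ => 0) z =
      (1 - A ^ 2) * (‖deriv (fun w => Complex.log (1 - w) - w / (1 - w)) z‖ + 0)
        / (1 + Gv ^ 2) := by
    simp only [nQuot, hharm, deriv_const', norm_zero]
    rfl
  rw [hnq]
  by_cases hc : (1/100 : ℝ) ≤ B
  · have hD : (1:ℝ) ≤ 1 + Gv ^ 2 := le_add_of_nonneg_right (sq_nonneg _)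
    have hnn : 0 ≤ (1 - A ^ 2) *
        (‖deriv (fun w => Complex.log (1 - w) - w / (1 - w)) z‖ + 0) := by
      have : 0 ≤ 1 - A ^ 2 := by nlinarith
      positivity
    calc _ ≤ (1 - A ^ 2) *
        (‖deriv (fun w => Complex.log (1 - w) - w / (1 - w)) z‖ + 0) :=
          div_le_self hnn hD
      _ ≤ 3 / B ^ 2 := hnum
      _ ≤ 30000 := by rw [div_le_iff₀ (by positivity)]; nlinarith
  · push_neg at hc
    -- lower bound on Gv
    have hA99 : (99/100 : ℝ) ≤ A := by
      have h1le : (1:ℝ) ≤ A + B := by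
        have : ‖z + (1 - z)‖ ≤ A + B := norm_add_le _ _
        simpa using this
      linarith
    have hlog_le : ‖Complex.log (1 - z)‖ ≤ (6/25) / B := by
      have hre : (Complex.log (1 - z)).re = Real.log B := by rw [Complex.log_re, hBdef]
      have him : |(Complex.log (1 - z)).im| ≤ Real.pi := by
        rw [Complex.log_im]; exact Complex.abs_arg_le_pi _
      have htri := Complex.norm_le_abs_re_add_abs_im (Complex.log (1 - z))
      rw [hre] at htri
      have hlogB : |Real.log B| ≤ (1/5) / B := by
        have hBlt1 : B < 1 := lt_trans hc (by norm_num)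
        have hneg : Real.log B < 0 := Real.log_neg hB hBlt1
        rw [abs_of_neg hneg]
        set u := Real.sqrt B with hu_def
        have hu : 0 < u := Real.sqrt_pos.mpr hB
        have hu2 : u ^ 2 = B := Real.sq_sqrt hB.le
        have hlogu : Real.log B = 2 * Real.log u := by
          rw [← hu2, Real.log_pow]; push_cast; ring
        have hloginv : Real.log u⁻¹ ≤ u⁻¹ - 1 := Real.log_le_sub_one_of_pos (by positivity)
        have hloginv' : -Real.log u ≤ u⁻¹ := by
          rw [Real.log_inv] at hloginv; linarith
        have hu10 : u ≤ 1/10 := by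
          rw [show (1/10 : ℝ) = Real.sqrt (1/100) by
            rw [show (1/100:ℝ) = (1/10)^2 by norm_num, Real.sqrt_sq (by norm_num)]]
          exact Real.sqrt_le_sqrt (by linarith)
        have h2u : 2 * u⁻¹ ≤ (1/5) / B := by
          rw [← div_eq_mul_inv, div_le_div_iff₀ hu hB]; nlinarith
        have hfin : -Real.log B ≤ 2 * u⁻¹ := by rw [hlogu]; linarith
        linarith
      have hpi : Real.pi ≤ (1/25) / B := by
        have h4 : Real.pi ≤ 4 := by linarith [Real.pi_le_four]
        rw [le_div_iff₀ hB]; nlinarith [Real.pi_pos]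
      have : (1/5:ℝ)/B + (1/25)/B = (6/25)/B := by ring
      linarith
    have hq : ‖z / (1 - z)‖ = A / B := by rw [norm_div]
    have hGv : (3/4 : ℝ) / B ≤ Gv := by
      have hns : ‖z / (1 - z)‖ - ‖Complex.log (1 - z)‖ ≤ Gv := by
        have h := norm_sub_norm_le (z / (1 - z)) (Complex.log (1 - z))
        rw [show ‖z / (1 - z) - Complex.log (1 - z)‖
            = Gv by rw [hGvdef, ← norm_neg]; ring_nf] at h
        linarith
      have hAB : (99/100 : ℝ) / B ≤ A / B := by gcongr
      have : (3/4:ℝ)/B + (6/25)/B = (99/100)/B := by ring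
      rw [hq] at hns
      linarith
    have e1 : ((3/4 : ℝ) / B) ^ 2 = (9/16) / B ^ 2 := by rw [div_pow]; norm_num
    have h9 : (9/16 : ℝ) / B ^ 2 ≤ Gv ^ 2 := by
      rw [← e1]; exact pow_le_pow_left₀ (by positivity) hGv 2
    have hDpos : (0:ℝ) < 1 + Gv ^ 2 :=
      lt_of_lt_of_le one_pos (le_add_of_nonneg_right (sq_nonneg Gv))
    rw [div_le_iff₀ hDpos]
    have hx : (0:ℝ) ≤ (B ^ 2)⁻¹ := inv_nonneg.mpr (sq_nonneg B)
    have h3 : (3:ℝ) / B ^ 2 ≤ 30000 * (1 + Gv ^ 2) := by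
      have s2 : (3:ℝ) / B ^ 2 ≤ 30000 * ((9/16) / B ^ 2) := by
        rw [show (30000:ℝ) * ((9/16) / B ^ 2) = 16875 / B ^ 2 by ring]
        gcongr <;> norm_num
      have s3 : (30000:ℝ) * ((9/16) / B ^ 2) ≤ 30000 * Gv ^ 2 := by linarith
      nlinarith [sq_nonneg Gv]
    linarith

lemma part3 (M : ℝ) : ∃ z ∈ 𝔻, M ≤ nQuot (fun w => w / (1 - w))
    (fun w => Complex.log (1 - w) - w / (1 - w)) z := by
  obtain ⟨n, hn⟩ := exists_nat_ge (512 * M + 512)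
  set N : ℝ := (n : ℝ) + 1 with hN_def
  clear_value N
  have hN1 : (1:ℝ) ≤ N := by
    have h0 : (0:ℝ) ≤ (n:ℝ) := Nat.cast_nonneg n
    rw [hN_def]; linarith
  have hNM : 512 * M + 512 ≤ N := by
    rw [hN_def]; linarith
  set t : ℝ := Real.exp (-N) with ht_def
  clear_value t
  have ht0 : 0 < t := by rw [ht_def]; exact Real.exp_pos _
  have ht1 : t < 1/2 := by
    have h1 : t ≤ Real.exp (-1) := by
      rw [ht_def]; exact Real.exp_le_exp.mpr (by linarith)
    have h2 : (2:ℝ) < Real.exp 1 := by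
      have := Real.exp_one_gt_d9; linarith
    have h3 : Real.exp (-1) < 1/2 := by
      rw [Real.exp_neg]
      rw [inv_lt_comm₀ (Real.exp_pos 1) (by norm_num)]
      linarith
    linarith
  set z : ℂ := ((1 - t : ℝ) : ℂ) with hz_def
  clear_value z
  have hz_abs : ‖z‖ = 1 - t := by
    rw [hz_def, Complex.norm_real, Real.norm_eq_abs, abs_of_pos (by linarith)]
  have hz1 : ‖z‖ < 1 := by rw [hz_abs]; linarith
  have hzD : z ∈ 𝔻 := by
    rw [unitDisk, mem_ball_zero_iff, hz_abs]; linarith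
  refine ⟨z, hzD, ?_⟩
  have h1z : (1:ℂ) - z = ((t : ℝ) : ℂ) := by rw [hz_def]; push_cast; ring
  have htne : ((t:ℝ):ℂ) ≠ 0 := by exact_mod_cast ht0.ne'
  have hne : (1:ℂ) - z ≠ 0 := by rw [h1z]; exact htne
  have hderh : ‖deriv (fun w : ℂ => w / (1 - w)) z‖ = 1 / t ^ 2 := by
    rw [(hasDerivAt_h hne).deriv, h1z, norm_div, norm_one, norm_pow, Complex.norm_real, Real.norm_eq_abs,
      abs_of_pos ht0]
  have hlog : Complex.log (1 - z) = ((Real.log t : ℝ) : ℂ) := by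
    rw [h1z, ← Complex.ofReal_log ht0.le]
  have hzq : z / (1 - z) = (((1 - t) / t : ℝ) : ℂ) := by
    rw [h1z, hz_def]; norm_cast
  have hharm : harmMap (fun w => w / (1 - w)) (fun w => Complex.log (1 - w) - w / (1 - w)) z
      = ((Real.log t : ℝ) : ℂ) := by
    simp only [harmMap]
    rw [hlog, hzq, ← Complex.ofReal_sub, Complex.conj_ofReal, ← Complex.ofReal_add]
    norm_cast
    ring
  have hlogt : Real.log t = -N := by rw [ht_def, Real.log_exp]
  have habsharm : ‖harmMap (fun w => w / (1 - w))
      (fun w => Complex.log (1 - w) - w / (1 - w)) z‖ ^ 2 = N ^ 2 := by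
    rw [hharm, Complex.norm_real, Real.norm_eq_abs, _root_.sq_abs, hlogt]
    ring
  rw [nQuot, hderh, habsharm, hz_abs]
  set d := ‖deriv (fun w => Complex.log (1 - w) - w / (1 - w)) z‖ with hd_def
  clear_value d
  have hd0 : 0 ≤ d := by rw [hd_def]; exact norm_nonneg _
  have hDpos : (0:ℝ) < 1 + N ^ 2 := by positivity
  rw [le_div_iff₀ hDpos]
  have hX1 : (1:ℝ) / t ≤ (1 - (1 - t) ^ 2) * (1 / t ^ 2 + d) := by
    have e0 : (1:ℝ) / t = t * (1 / t ^ 2) := by field_simp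
    have e2 : t ≤ 1 - (1 - t) ^ 2 := by nlinarith
    rw [e0]
    exact mul_le_mul e2 (le_add_of_nonneg_right hd0) (by positivity) (by nlinarith)
  have hexp : (1:ℝ) / t = Real.exp N := by
    rw [ht_def, Real.exp_neg]; field_simp
  have hexp4 : Real.exp N = (Real.exp (N / 4)) ^ 4 := by
    rw [← Real.exp_nat_mul]; congr 1; push_cast; ring
  have h14 : N / 4 ≤ Real.exp (N / 4) := by
    have := Real.add_one_le_exp (N / 4); linarith
  have hquart : (N / 4) ^ 4 ≤ Real.exp N := by
    rw [hexp4]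
    exact pow_le_pow_left₀ (by positivity) h14 4
  have hMN : M * (1 + N ^ 2) ≤ 1 / t := by
    rw [hexp]
    have hM512 : M ≤ N / 512 := by linarith
    have h1 : M * N ^ 2 ≤ (N / 512) * N ^ 2 := mul_le_mul_of_nonneg_right hM512 (sq_nonneg N)
    have h2 : N ^ 3 ≤ N ^ 4 := pow_le_pow_right₀ hN1 (by norm_num)
    have h3 : N ≤ N ^ 4 := le_self_pow₀ hN1 (by norm_num)
    have hfin : M * (1 + N ^ 2) ≤ (N / 4) ^ 4 := by nlinarith [h1, h2, h3]
    linarith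
  linarith

theorem not_normal_example :
    let h : ℂ → ℂ := fun z => z / (1 - z)
    let g : ℂ → ℂ := fun z => Complex.log (1 - z) - z / (1 - z)
    harmNorm h (fun _ => 0) < ⊤ ∧ harmNorm g (fun _ => 0) < ⊤ ∧ harmNorm h g = ⊤ := by
  intro h g
  refine ⟨?_, ?_, ?_⟩
  · have hle : harmNorm h (fun _ => 0) ≤ ENNReal.ofReal 2 := by
      rw [harmNorm]
      apply iSup₂_le
      intro z hz
      exact ENNReal.ofReal_le_ofReal (part1_bound (abs_lt_one_of_mem hz))
    exact lt_of_le_of_lt hle ENNReal.ofReal_lt_top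
  · have hle : harmNorm g (fun _ => 0) ≤ ENNReal.ofReal 30000 := by
      rw [harmNorm]
      apply iSup₂_le
      intro z hz
      exact ENNReal.ofReal_le_ofReal (part2_bound (abs_lt_one_of_mem hz))
    exact lt_of_le_of_lt hle ENNReal.ofReal_lt_top
  · apply ENNReal.eq_top_of_forall_nnreal_le
    intro r
    obtain ⟨z, hzD, hle⟩ := part3 (r : ℝ)
    calc (r : ℝ≥0∞) = ENNReal.ofReal (r : ℝ) := ENNReal.ofReal_coe_nnreal.symm
      _ ≤ ENNReal.ofReal (nQuot h g z) := ENNReal.ofReal_le_ofReal hle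
      _ ≤ harmNorm h g :=
          le_iSup₂ (f := fun z _ => ENNReal.ofReal (nQuot h g z)) z hzD
end
end

section
/- Let f = h + conj(g) be a normal harmonic mapping on the unit disk 𝔻. Then the family F = {f∘φ : φ ∈ Aut(𝔻)} is spherically equicontinuous on compact subsets of 𝔻; more precisely, for every z₁ ∈ 𝔻 there exist r > 0 and a constant M̂ > 0 such that χ(f(φ(z)), f(φ(z₁))) ≤ M̂·|z − z₁| for every φ ∈ Aut(𝔻) and every z with |z − z₁| ≤ r. Consequently F is a normal family on 𝔻 (every sequence in F has a subsequence converging locally uniformly on 𝔻 with respect to the chordal metric). -/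
open Complex Metric Set ENNReal Filter

noncomputable section

/-- The chordal distance on the Riemann sphere, identified with `Option ℂ`
(`none` is the point at infinity). -/
def chordalO : Option ℂ → Option ℂ → ℝ
  | Option.some z, Option.some w => chordal z w
  | Option.some z, Option.none => 1 / Real.sqrt (1 + ‖z‖ ^ 2)
  | Option.none, Option.some w => 1 / Real.sqrt (1 + ‖w‖ ^ 2)
  | Option.none, Option.none => 0

/-! ### Auxiliary development -/

set_option maxHeartbeats 1000000

section Aux

/-- The model of the Riemann sphere sitting in `ℂ × ℝ` with the `L²` norm. -/
abbrev Esph := WithLp 2 (ℂ × ℝ)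

def isoE : (ℂ × ℝ) ≃L[ℝ] Esph := (WithLp.prodContinuousLinearEquiv 2 ℝ ℂ ℝ).symm

def uu (w : ℂ) : ℝ := (1 + Complex.normSq w)⁻¹

/-- Stereographic embedding of `ℂ` onto the sphere of radius `1/2` centred at `(0, 1/2)`. -/
def SS (w : ℂ) : Esph := isoE (uu w • w, Complex.normSq w * uu w)

lemma one_add_normSq_pos (w : ℂ) : 0 < 1 + Complex.normSq w :=
  add_pos_of_pos_of_nonneg one_pos (Complex.normSq_nonneg w)

lemma uu_pos (w : ℂ) : 0 < uu w := inv_pos.2 (one_add_normSq_pos w)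

lemma normSq_lt_one {z : ℂ} (hz : z ∈ Metric.ball (0:ℂ) 1) : Complex.normSq z < 1 := by
  have := mem_ball_zero_iff.1 hz
  rw [← Complex.sq_norm]
  nlinarith [norm_nonneg z, this]

lemma SS_sub_eq (a b : ℂ) : SS a - SS b
    = isoE (uu a • a - uu b • b, Complex.normSq a * uu a - Complex.normSq b * uu b) := by
  simp [SS, ← map_sub, Prod.mk_sub_mk]

lemma normSq_smul_sub_smul (s t : ℝ) (a b : ℂ) :
    Complex.normSq (s • a - t • b)
      = s^2 * Complex.normSq a - 2 * (s * t) * (a * (starRingEnd ℂ) b).re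
        + t^2 * Complex.normSq b := by
  rw [Complex.normSq_sub]
  have h1 : Complex.normSq (s • a) = s^2 * Complex.normSq a := by
    simp [Complex.normSq_apply, Complex.smul_re, Complex.smul_im]; ring
  have h2 : Complex.normSq (t • b) = t^2 * Complex.normSq b := by
    simp [Complex.normSq_apply, Complex.smul_re, Complex.smul_im]; ring
  have h3 : ((s • a) * (starRingEnd ℂ) (t • b)).re = (s*t) * (a * (starRingEnd ℂ) b).re := by
    simp [Complex.smul_re, Complex.smul_im, Complex.mul_re, Complex.conj_re, Complex.conj_im]
    ring
  rw [h1, h2, h3]; ring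

lemma norm_SS_sub (a b : ℂ) : ‖SS a - SS b‖ = chordal a b := by
  rw [SS_sub_eq]
  rw [show ‖(isoE (uu a • a - uu b • b, Complex.normSq a * uu a - Complex.normSq b * uu b) : Esph)‖
    = Real.sqrt (‖uu a • a - uu b • b‖^2 + ‖Complex.normSq a * uu a - Complex.normSq b * uu b‖^2)
    from WithLp.prod_norm_eq_of_L2 _]
  have ha := one_add_normSq_pos a
  have hb := one_add_normSq_pos b
  have key : ‖uu a • a - uu b • b‖^2 + ‖Complex.normSq a * uu a - Complex.normSq b * uu b‖^2
      = Complex.normSq (a - b) / ((1 + Complex.normSq a) * (1 + Complex.normSq b)) := by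
    rw [Complex.sq_norm, Real.norm_eq_abs, _root_.sq_abs,
      normSq_smul_sub_smul, Complex.normSq_sub]
    simp only [uu]
    rw [_root_.eq_div_iff (by positivity)]
    set p := Complex.normSq a with hp
    set q := Complex.normSq b with hq
    set r := (a * (starRingEnd ℂ) b).re with hr
    have h1 : (1:ℝ) + p ≠ 0 := ne_of_gt ha
    have h2 : (1:ℝ) + q ≠ 0 := ne_of_gt hb
    field_simp
    ring
  rw [key, chordal, Complex.sq_norm, Complex.sq_norm,
    Real.sqrt_div (Complex.normSq_nonneg _), Real.sqrt_mul ha.le, Complex.norm_def]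

lemma hasFDerivAt_normSq' (w : ℂ) :
    HasFDerivAt Complex.normSq
      ((2 * w.re) • Complex.reCLM + (2 * w.im) • Complex.imCLM : ℂ →L[ℝ] ℝ) w := by
  have hre : HasFDerivAt (fun z : ℂ => z.re) (Complex.reCLM : ℂ →L[ℝ] ℝ) w :=
    Complex.reCLM.hasFDerivAt
  have him : HasFDerivAt (fun z : ℂ => z.im) (Complex.imCLM : ℂ →L[ℝ] ℝ) w :=
    Complex.imCLM.hasFDerivAt
  have h1 := (hre.mul hre).add (him.mul him)
  have h2 : HasFDerivAt Complex.normSq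
      (w.re • (Complex.reCLM : ℂ →L[ℝ] ℝ) + w.re • (Complex.reCLM : ℂ →L[ℝ] ℝ)
        + (w.im • (Complex.imCLM : ℂ →L[ℝ] ℝ) + w.im • (Complex.imCLM : ℂ →L[ℝ] ℝ))) w := by
    exact h1.congr_of_eventuallyEq (Filter.Eventually.of_forall fun z => by simp [Complex.normSq_apply])
  convert h2 using 1
  ext v
  simp
  ring

lemma normSq_deriv_bound (w v : ℂ) :
    |((2 * w.re) • Complex.reCLM + (2 * w.im) • Complex.imCLM : ℂ →L[ℝ] ℝ) v|
      ≤ 2 * ‖w‖ * ‖v‖ := by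
  have heq : ((2 * w.re) • Complex.reCLM + (2 * w.im) • Complex.imCLM : ℂ →L[ℝ] ℝ) v
      = 2 * (((starRingEnd ℂ) w) * v).re := by
    simp [Complex.mul_re, Complex.conj_re, Complex.conj_im]
    ring
  rw [heq, abs_mul]
  have h2 : |(((starRingEnd ℂ) w) * v).re| ≤ ‖((starRingEnd ℂ) w) * v‖ :=
    Complex.abs_re_le_norm _
  have h3 : ‖((starRingEnd ℂ) w) * v‖ = ‖w‖ * ‖v‖ := by
    rw [norm_mul, Complex.norm_conj]
  have h4 : |(2:ℝ)| = 2 := by norm_num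
  rw [h4]
  calc 2 * |(((starRingEnd ℂ) w) * v).re| ≤ 2 * (‖w‖ * ‖v‖) := by
        rw [← h3]; exact mul_le_mul_of_nonneg_left h2 (by norm_num)
    _ = 2 * ‖w‖ * ‖v‖ := by ring

/-- Derivative of `SS` with the key bound. -/
lemma hasFDerivAt_SS (w : ℂ) :
    ∃ L : ℂ →L[ℝ] Esph, HasFDerivAt SS L w ∧ ∀ v : ℂ, ‖L v‖ ≤ 4 * uu w * ‖v‖ := by
  set Lq : ℂ →L[ℝ] ℝ := (2 * w.re) • Complex.reCLM + (2 * w.im) • Complex.imCLM with hLq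
  have hq : HasFDerivAt Complex.normSq Lq w := hasFDerivAt_normSq' w
  have hden : (1 : ℝ) + Complex.normSq w ≠ 0 := ne_of_gt (one_add_normSq_pos w)
  have h1q : HasFDerivAt (fun z : ℂ => 1 + Complex.normSq z) Lq w := hq.const_add 1
  have hinv : HasDerivAt (fun y : ℝ => y⁻¹) (-((1 + Complex.normSq w)^2)⁻¹)
      (1 + Complex.normSq w) := by
    simpa using hasDerivAt_inv hden
  have hu : HasFDerivAt uu ((-((1 + Complex.normSq w)^2)⁻¹ : ℝ) • Lq) w :=
    hinv.comp_hasFDerivAt w h1q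
  set Lu : ℂ →L[ℝ] ℝ := (-((1 + Complex.normSq w)^2)⁻¹ : ℝ) • Lq with hLu
  have hP1 : HasFDerivAt (fun z : ℂ => uu z • z)
      (uu w • ContinuousLinearMap.id ℝ ℂ + Lu.smulRight w) w := by
    have := hu.smul (hasFDerivAt_id w)
    exact this
  have hP2eq : (fun z : ℂ => Complex.normSq z * uu z) = fun z : ℂ => 1 - uu z := by
    funext z
    have := ne_of_gt (one_add_normSq_pos z)
    rw [uu, eq_sub_iff_add_eq, ← add_one_mul, add_comm (Complex.normSq z) 1, mul_inv_cancel₀ this]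
  have hP2 : HasFDerivAt (fun z : ℂ => Complex.normSq z * uu z) (-Lu) w := by
    rw [hP2eq]
    simpa using hu.const_sub 1
  have hP : HasFDerivAt (fun z : ℂ => ((uu z • z, Complex.normSq z * uu z) : ℂ × ℝ))
      ((uu w • ContinuousLinearMap.id ℝ ℂ + Lu.smulRight w).prod (-Lu)) w := hP1.prodMk hP2
  refine ⟨(isoE : (ℂ × ℝ) →L[ℝ] Esph).comp
    ((uu w • ContinuousLinearMap.id ℝ ℂ + Lu.smulRight w).prod (-Lu)), ?_, ?_⟩
  · exact (isoE.toContinuousLinearMap.hasFDerivAt).comp w hP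
  · intro v
    have hLqv : |Lq v| ≤ 2 * ‖w‖ * ‖v‖ := normSq_deriv_bound w v
    have huw := uu_pos w
    have hw2 : ‖w‖^2 = Complex.normSq w := by rw [← Complex.sq_norm]
    have hLuv : |Lu v| ≤ ((1 + Complex.normSq w)^2)⁻¹ * (2 * ‖w‖ * ‖v‖) := by
      rw [hLu]
      simp only [ContinuousLinearMap.coe_smul', Pi.smul_apply, smul_eq_mul, abs_mul, abs_neg,
        abs_inv, _root_.abs_pow]
      rw [_root_.abs_of_pos (one_add_normSq_pos w)]
      exact mul_le_mul_of_nonneg_left hLqv (by positivity)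
    have hLuw : |Lu v| * ‖w‖ ≤ 2 * uu w * ‖v‖ := by
      have step : ((1 + Complex.normSq w)^2)⁻¹ * (2 * ‖w‖ * ‖v‖) * ‖w‖
          = 2 * (((1 + Complex.normSq w))⁻¹ * (Complex.normSq w * (1 + Complex.normSq w)⁻¹)) * ‖v‖ := by
        rw [← hw2]; rw [sq, mul_inv]; ring
      have hle : Complex.normSq w * (1 + Complex.normSq w)⁻¹ ≤ 1 := by
        rw [mul_inv_le_iff₀ (one_add_normSq_pos w)]
        linarith [Complex.normSq_nonneg w]
      calc |Lu v| * ‖w‖ ≤ ((1 + Complex.normSq w)^2)⁻¹ * (2 * ‖w‖ * ‖v‖) * ‖w‖ :=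
            mul_le_mul_of_nonneg_right hLuv (norm_nonneg _)
        _ = 2 * (((1 + Complex.normSq w))⁻¹ * (Complex.normSq w * (1 + Complex.normSq w)⁻¹)) * ‖v‖ := step
        _ ≤ 2 * (((1 + Complex.normSq w))⁻¹ * 1) * ‖v‖ := by
            apply mul_le_mul_of_nonneg_right _ (norm_nonneg v)
            apply mul_le_mul_of_nonneg_left _ (by norm_num)
            exact mul_le_mul_of_nonneg_left hle (by positivity)
        _ = 2 * uu w * ‖v‖ := by rw [mul_one]; rfl
    have hb1 : ‖(uu w • ContinuousLinearMap.id ℝ ℂ + Lu.smulRight w) v‖ ≤ 3 * uu w * ‖v‖ := by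
      have h1 : ‖(uu w • ContinuousLinearMap.id ℝ ℂ + Lu.smulRight w) v‖
          ≤ uu w * ‖v‖ + |Lu v| * ‖w‖ := by
        calc ‖(uu w • ContinuousLinearMap.id ℝ ℂ + Lu.smulRight w) v‖
            = ‖uu w • v + Lu v • w‖ := rfl
          _ ≤ ‖uu w • v‖ + ‖Lu v • w‖ := norm_add_le _ _
          _ = uu w * ‖v‖ + |Lu v| * ‖w‖ := by
              rw [norm_smul, norm_smul, Real.norm_eq_abs, Real.norm_eq_abs, _root_.abs_of_pos huw]
      calc ‖(uu w • ContinuousLinearMap.id ℝ ℂ + Lu.smulRight w) v‖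
          ≤ uu w * ‖v‖ + |Lu v| * ‖w‖ := h1
        _ ≤ uu w * ‖v‖ + 2 * uu w * ‖v‖ := by linarith
        _ = 3 * uu w * ‖v‖ := by ring
    have hb2 : ‖(-Lu) v‖ ≤ uu w * ‖v‖ := by
      rw [ContinuousLinearMap.neg_apply, norm_neg, Real.norm_eq_abs]
      calc |Lu v| ≤ ((1 + Complex.normSq w)^2)⁻¹ * (2 * ‖w‖ * ‖v‖) := hLuv
        _ ≤ uu w * ‖v‖ := by
            rw [sq, mul_inv]
            have h2w : 2 * ‖w‖ ≤ 1 + Complex.normSq w := by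
              rw [← hw2]; nlinarith [sq_nonneg (‖w‖ - 1)]
            calc (1 + Complex.normSq w)⁻¹ * (1 + Complex.normSq w)⁻¹ * (2 * ‖w‖ * ‖v‖)
                = (1 + Complex.normSq w)⁻¹ * ((2*‖w‖) * (1 + Complex.normSq w)⁻¹) * ‖v‖ := by ring
              _ ≤ (1 + Complex.normSq w)⁻¹ * 1 * ‖v‖ := by
                  apply mul_le_mul_of_nonneg_right _ (norm_nonneg v)
                  apply mul_le_mul_of_nonneg_left _ (by positivity)
                  rw [mul_inv_le_iff₀ (one_add_normSq_pos w)]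
                  linarith
              _ = uu w * ‖v‖ := by rw [mul_one]; rfl
    have hnorm : ‖((isoE : (ℂ × ℝ) →L[ℝ] Esph).comp
        ((uu w • ContinuousLinearMap.id ℝ ℂ + Lu.smulRight w).prod (-Lu))) v‖
        ≤ ‖(uu w • ContinuousLinearMap.id ℝ ℂ + Lu.smulRight w) v‖ + ‖(-Lu) v‖ := by
      rw [ContinuousLinearMap.comp_apply]
      set x := (uu w • ContinuousLinearMap.id ℝ ℂ + Lu.smulRight w) v
      set y := (-Lu) v
      have hxy : ‖((isoE : (ℂ × ℝ) →L[ℝ] Esph) (x, y))‖ = Real.sqrt (‖x‖^2 + ‖y‖^2) :=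
        WithLp.prod_norm_eq_of_L2 _
      rw [show ((uu w • ContinuousLinearMap.id ℝ ℂ + Lu.smulRight w).prod (-Lu)) v = (x, y) from rfl,
        hxy]
      have hs : ‖x‖^2 + ‖y‖^2 ≤ (‖x‖ + ‖y‖)^2 := by nlinarith [norm_nonneg x, norm_nonneg y]
      calc Real.sqrt (‖x‖^2 + ‖y‖^2) ≤ Real.sqrt ((‖x‖ + ‖y‖)^2) := Real.sqrt_le_sqrt hs
        _ = ‖x‖ + ‖y‖ := Real.sqrt_sq (by positivity)
    calc ‖((isoE : (ℂ × ℝ) →L[ℝ] Esph).comp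
        ((uu w • ContinuousLinearMap.id ℝ ℂ + Lu.smulRight w).prod (-Lu))) v‖
        ≤ ‖(uu w • ContinuousLinearMap.id ℝ ℂ + Lu.smulRight w) v‖ + ‖(-Lu) v‖ := hnorm
      _ ≤ 3 * uu w * ‖v‖ + uu w * ‖v‖ := add_le_add hb1 hb2
      _ = 4 * uu w * ‖v‖ := by ring

/-- The Möbius involution of the disk swapping `0` and `a`. -/
def moeb (a w : ℂ) : ℂ := (a - w) / (1 - (starRingEnd ℂ) a * w)

lemma moeb_den_ne {a w : ℂ} (ha : ‖a‖ < 1) (hw : ‖w‖ ≤ 1) :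
    (1 : ℂ) - (starRingEnd ℂ) a * w ≠ 0 := by
  intro hcon
  have h1 : (1 : ℂ) = (starRingEnd ℂ) a * w := by linear_combination hcon
  have h2 : (1:ℝ) = ‖(starRingEnd ℂ) a * w‖ := by rw [← h1]; simp
  rw [norm_mul, Complex.norm_conj] at h2
  nlinarith [norm_nonneg a, norm_nonneg w]

lemma moeb_zero (a : ℂ) : moeb a 0 = a := by simp [moeb]

lemma moeb_self {a : ℂ} : moeb a a = 0 := by simp [moeb]

lemma moeb_maps {a : ℂ} (ha : a ∈ Metric.ball (0:ℂ) 1) :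
    Set.MapsTo (moeb a) (Metric.ball (0:ℂ) 1) (Metric.ball (0:ℂ) 1) := by
  intro w hw
  rw [mem_ball_zero_iff] at ha hw ⊢
  have hden := moeb_den_ne (by simpa using ha) (le_of_lt (by simpa using hw))
  rw [moeb, norm_div]
  rw [div_lt_one (norm_pos_iff.mpr hden)]
  have key : Complex.normSq (a - w) < Complex.normSq (1 - (starRingEnd ℂ) a * w) := by
    have h1 : Complex.normSq (1 - (starRingEnd ℂ) a * w) - Complex.normSq (a - w)
        = (1 - Complex.normSq a) * (1 - Complex.normSq w) := by
      simp only [Complex.normSq_apply, Complex.sub_re, Complex.sub_im, Complex.mul_re,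
        Complex.mul_im, Complex.one_re, Complex.one_im, Complex.conj_re, Complex.conj_im]
      ring
    have h2 : Complex.normSq a < 1 := by
      rw [← Complex.sq_norm]; nlinarith [norm_nonneg a, ha]
    have h3 : Complex.normSq w < 1 := by
      rw [← Complex.sq_norm]; nlinarith [norm_nonneg w, hw]
    nlinarith
  have key2 := Complex.normSq_eq_norm_sq (a - w) ▸ Complex.normSq_eq_norm_sq (1 - (starRingEnd ℂ) a * w) ▸ key
  have habs : ‖a-w‖ < ‖1 - (starRingEnd ℂ) a * w‖ := by
    nlinarith [norm_nonneg (a-w), norm_nonneg (1 - (starRingEnd ℂ) a * w)]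
  simpa using habs

lemma moeb_hasDerivAt {a w : ℂ} (ha : ‖a‖ < 1) (hw : ‖w‖ ≤ 1) :
    HasDerivAt (moeb a) ((Complex.normSq a - 1) / (1 - (starRingEnd ℂ) a * w)^2) w := by
  have hden := moeb_den_ne ha hw
  have hnum : HasDerivAt (fun y : ℂ => a - y) (-1) w := by
    simpa using (hasDerivAt_id w).const_sub a
  have hden' : HasDerivAt (fun y : ℂ => 1 - (starRingEnd ℂ) a * y) (-(starRingEnd ℂ) a) w := by
    simpa using ((hasDerivAt_id w).const_mul ((starRingEnd ℂ) a)).const_sub 1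
  have hdiv := hnum.div hden' hden
  have hc : ((starRingEnd ℂ) a) * a = (Complex.normSq a : ℂ) := by
    rw [mul_comm]; exact Complex.mul_conj a
  have hnumeq : (-1 * (1 - (starRingEnd ℂ) a * w) - (a - w) * -(starRingEnd ℂ) a)
      = (Complex.normSq a : ℂ) - 1 := by linear_combination hc
  rw [hnumeq] at hdiv
  exact hdiv

lemma moeb_differentiableOn {a : ℂ} (ha : a ∈ Metric.ball (0:ℂ) 1) :
    DifferentiableOn ℂ (moeb a) (Metric.ball (0:ℂ) 1) := by
  intro w hw
  rw [mem_ball_zero_iff] at ha hw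
  exact (moeb_hasDerivAt (by simpa using ha)
    (le_of_lt (by simpa using hw))).differentiableAt.differentiableWithinAt

/-- **Schwarz–Pick**. -/
lemma schwarz_pick {φ : ℂ → ℂ} (hφd : DifferentiableOn ℂ φ (Metric.ball (0:ℂ) 1))
    (hφm : Set.MapsTo φ (Metric.ball (0:ℂ) 1) (Metric.ball (0:ℂ) 1)) {z : ℂ}
    (hz : z ∈ Metric.ball (0:ℂ) 1) :
    ‖deriv φ z‖ * (1 - Complex.normSq z) ≤ 1 - Complex.normSq (φ z) := by
  set b := φ z with hb
  have hzb : b ∈ Metric.ball (0:ℂ) 1 := hφm hz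
  have hza : ‖z‖ < 1 := by simpa using mem_ball_zero_iff.1 hz
  have hba : ‖b‖ < 1 := by simpa using mem_ball_zero_iff.1 hzb
  have hzn : Complex.normSq z < 1 := by rw [← Complex.sq_norm]; nlinarith [norm_nonneg z]
  have hbn : Complex.normSq b < 1 := by rw [← Complex.sq_norm]; nlinarith [norm_nonneg b]
  set Ψ : ℂ → ℂ := (moeb b) ∘ φ ∘ (moeb z) with hΨ
  have hΨd : DifferentiableOn ℂ Ψ (Metric.ball (0:ℂ) 1) :=
    ((moeb_differentiableOn hzb).comp (hφd.comp (moeb_differentiableOn hz) (moeb_maps hz))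
      ((hφm.comp (moeb_maps hz))))
  have hΨm : Set.MapsTo Ψ (Metric.ball (0:ℂ) 1) (Metric.ball (0:ℂ) 1) :=
    (moeb_maps hzb).comp (hφm.comp (moeb_maps hz))
  have hΨ0 : Ψ 0 = 0 := by
    simp only [hΨ, Function.comp_apply, moeb_zero, ← hb, moeb_self]
  have hbound : ‖deriv Ψ 0‖ ≤ 1 :=
    Complex.norm_deriv_le_one_of_mapsTo_ball hΨd
      (by rw [hΨ0]; exact hΨm.mono_right ball_subset_closedBall) one_pos
  have hd1 : HasDerivAt (moeb z) ((Complex.normSq z - 1) : ℂ) 0 := by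
    have := moeb_hasDerivAt hza (by simp : ‖(0:ℂ)‖ ≤ 1)
    simpa using this
  have hdφ : HasDerivAt φ (deriv φ z) z :=
    ((hφd.differentiableAt (isOpen_ball.mem_nhds hz)).hasDerivAt)
  have hd3 : HasDerivAt (moeb b) ((Complex.normSq b - 1) / (1 - (Complex.normSq b : ℂ))^2) b := by
    have := moeb_hasDerivAt hba (le_of_lt hba)
    rwa [show (starRingEnd ℂ) b * b = (Complex.normSq b : ℂ) by
      rw [mul_comm]; exact Complex.mul_conj b] at this
  have hchain : HasDerivAt Ψ
      (((Complex.normSq b - 1) / (1 - (Complex.normSq b : ℂ))^2) * deriv φ z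
        * ((Complex.normSq z - 1) : ℂ)) 0 := by
    have hdφ' : HasDerivAt φ (deriv φ z) (moeb z 0) := by rw [moeb_zero]; exact hdφ
    have h2 : HasDerivAt (φ ∘ moeb z) (deriv φ z * ((Complex.normSq z - 1) : ℂ)) 0 :=
      HasDerivAt.comp 0 hdφ' hd1
    have hd3' : HasDerivAt (moeb b) ((Complex.normSq b - 1) / (1 - (Complex.normSq b : ℂ))^2)
        ((φ ∘ moeb z) 0) := by
      simp only [Function.comp_apply, moeb_zero]; exact hd3
    have h3 := HasDerivAt.comp 0 hd3' h2
    simpa [hΨ, mul_assoc] using h3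
  have hderiv : deriv Ψ 0 = ((Complex.normSq b - 1) / (1 - (Complex.normSq b : ℂ))^2) * deriv φ z
      * ((Complex.normSq z - 1) : ℂ) := hchain.deriv
  rw [hderiv] at hbound
  have habs : ‖((Complex.normSq b - 1) / (1 - (Complex.normSq b : ℂ))^2) * deriv φ z
        * ((Complex.normSq z - 1) : ℂ)‖
      = ((1 - Complex.normSq b) / (1 - Complex.normSq b)^2) * ‖deriv φ z‖
        * (1 - Complex.normSq z) := by
    rw [norm_mul, norm_mul, norm_div]
    have e1 : ((Complex.normSq b - 1 : ℝ) : ℂ) = (Complex.normSq b : ℂ) - 1 := by push_cast; ring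
    have e2 : ((1 - Complex.normSq b : ℝ) : ℂ) = 1 - (Complex.normSq b : ℂ) := by push_cast; ring
    have e3 : ((Complex.normSq z - 1 : ℝ) : ℂ) = (Complex.normSq z : ℂ) - 1 := by push_cast; ring
    rw [← e1, ← e3, norm_pow, ← e2]
    simp only [Complex.norm_real, Real.norm_eq_abs]
    rw [_root_.abs_of_nonpos (by linarith : Complex.normSq b - 1 ≤ 0),
      _root_.abs_of_nonneg (by linarith : (0:ℝ) ≤ 1 - Complex.normSq b),
      _root_.abs_of_nonpos (by linarith : Complex.normSq z - 1 ≤ 0)]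
    ring
  rw [habs] at hbound
  have hpos : (0:ℝ) < 1 - Complex.normSq b := by linarith
  have hsimp : ((1 - Complex.normSq b) / (1 - Complex.normSq b)^2) = (1 - Complex.normSq b)⁻¹ := by
    rw [sq]; field_simp
  rw [hsimp] at hbound
  have hfin := mul_le_mul_of_nonneg_left hbound hpos.le
  rw [mul_one] at hfin
  calc ‖deriv φ z‖ * (1 - Complex.normSq z)
      = (1 - Complex.normSq b) * ((1 - Complex.normSq b)⁻¹ * ‖deriv φ z‖
          * (1 - Complex.normSq z)) := by field_simp
    _ ≤ 1 - Complex.normSq b := hfin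

end Aux


section Aux2

/-- Main derivative bound for `SS ∘ f ∘ φ`. -/
lemma key_deriv (h g : ℂ → ℂ) (hh : DifferentiableOn ℂ h 𝔻) (hg : DifferentiableOn ℂ g 𝔻)
    (M₀ : ℝ) (hM : ∀ w ∈ 𝔻, nQuot h g w ≤ M₀)
    {φ : ℂ → ℂ} (hφd : DifferentiableOn ℂ φ 𝔻) (hφm : MapsTo φ 𝔻 𝔻)
    {z : ℂ} (hz : z ∈ 𝔻) :
    ∃ L : ℂ →L[ℝ] Esph, HasFDerivAt (fun w => SS (harmMap h g (φ w))) L z ∧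
      ‖L‖ ≤ 4 * M₀ / (1 - Complex.normSq z) := by
  have hD : IsOpen 𝔻 := isOpen_ball
  have hw : φ z ∈ 𝔻 := hφm hz
  set w := φ z with hwdef
  -- complex derivatives
  have hφz : HasDerivAt φ (deriv φ z) z := (hφd.differentiableAt (hD.mem_nhds hz)).hasDerivAt
  have hhw : HasDerivAt h (deriv h w) w := (hh.differentiableAt (hD.mem_nhds hw)).hasDerivAt
  have hgw : HasDerivAt g (deriv g w) w := (hg.differentiableAt (hD.mem_nhds hw)).hasDerivAt
  have hhφ : HasDerivAt (fun x => h (φ x)) (deriv h w * deriv φ z) z := hhw.comp z hφz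
  have hgφ : HasDerivAt (fun x => g (φ x)) (deriv g w * deriv φ z) z := hgw.comp z hφz
  -- real Fréchet derivatives
  set dh : ℂ := deriv h w * deriv φ z
  set dg : ℂ := deriv g w * deriv φ z
  have hFh : HasFDerivAt (fun x => h (φ x))
      ((ContinuousLinearMap.smulRight (1 : ℂ →L[ℂ] ℂ) dh).restrictScalars ℝ) z :=
    (hasDerivAt_iff_hasFDerivAt.1 hhφ).restrictScalars ℝ
  have hFg : HasFDerivAt (fun x => g (φ x))
      ((ContinuousLinearMap.smulRight (1 : ℂ →L[ℂ] ℂ) dg).restrictScalars ℝ) z :=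
    (hasDerivAt_iff_hasFDerivAt.1 hgφ).restrictScalars ℝ
  set conjL : ℂ →L[ℝ] ℂ := Complex.conjCLE.toContinuousLinearMap
  have hFcg : HasFDerivAt (fun x => (starRingEnd ℂ) (g (φ x)))
      (conjL.comp ((ContinuousLinearMap.smulRight (1 : ℂ →L[ℂ] ℂ) dg).restrictScalars ℝ)) z :=
    (conjL.hasFDerivAt).comp z hFg
  set LF : ℂ →L[ℝ] ℂ :=
    (ContinuousLinearMap.smulRight (1 : ℂ →L[ℂ] ℂ) dh).restrictScalars ℝ
      + conjL.comp ((ContinuousLinearMap.smulRight (1 : ℂ →L[ℂ] ℂ) dg).restrictScalars ℝ)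
    with hLF
  have hFf : HasFDerivAt (fun x => harmMap h g (φ x)) LF z := by
    simp only [harmMap]
    exact hFh.add hFcg
  have hLFbound : ∀ v : ℂ, ‖LF v‖ ≤ (‖dh‖ + ‖dg‖) * ‖v‖ := by
    intro v
    have h1 : LF v = v • dh + (starRingEnd ℂ) (v • dg) := rfl
    rw [h1]
    calc ‖v • dh + (starRingEnd ℂ) (v • dg)‖ ≤ ‖v • dh‖ + ‖(starRingEnd ℂ) (v • dg)‖ :=
          norm_add_le _ _
      _ = ‖v‖ * ‖dh‖ + ‖v‖ * ‖dg‖ := by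
          rw [RCLike.norm_conj, norm_smul, norm_smul]
      _ = (‖dh‖ + ‖dg‖) * ‖v‖ := by
          ring
  obtain ⟨LS, hLS, hLSb⟩ := hasFDerivAt_SS (harmMap h g w)
  refine ⟨LS.comp LF, (hLS.comp z hFf :), ?_⟩
  -- numeric bound
  have hA : (0:ℝ) < 1 - Complex.normSq z := by linarith [normSq_lt_one hz]
  have hB : (0:ℝ) < 1 - Complex.normSq w := by linarith [normSq_lt_one hw]
  have hU := uu_pos (harmMap h g w)
  have hnq := hM w hw
  have hnq' : (1 - Complex.normSq w) * (‖deriv h w‖ + ‖deriv g w‖)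
      * uu (harmMap h g w) ≤ M₀ := by
    have hden := one_add_normSq_pos (harmMap h g w)
    rw [nQuot, Complex.sq_norm, Complex.sq_norm, div_le_iff₀ hden] at hnq
    calc (1 - Complex.normSq w) * (‖deriv h w‖ + ‖deriv g w‖)
        * uu (harmMap h g w)
        ≤ M₀ * (1 + Complex.normSq (harmMap h g w)) * uu (harmMap h g w) := by
          exact mul_le_mul_of_nonneg_right hnq (le_of_lt hU)
      _ = M₀ := by
          rw [uu, mul_assoc, mul_inv_cancel₀ (ne_of_gt hden), mul_one]
  have hSP := schwarz_pick hφd hφm hz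
  have hM₀ : 0 ≤ M₀ := by
    refine le_trans ?_ hnq
    rw [nQuot]
    have := normSq_lt_one hw
    rw [Complex.sq_norm]
    positivity
  apply ContinuousLinearMap.opNorm_le_bound _ (by positivity)
  intro v
  have hd : ‖dh‖ + ‖dg‖
      = (‖deriv h w‖ + ‖deriv g w‖) * ‖deriv φ z‖ := by
    simp only [dh, dg, norm_mul]; ring
  calc ‖(LS.comp LF) v‖ = ‖LS (LF v)‖ := rfl
    _ ≤ 4 * uu (harmMap h g w) * ‖LF v‖ := hLSb _
    _ ≤ 4 * uu (harmMap h g w) * ((‖dh‖ + ‖dg‖) * ‖v‖) := by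
        apply mul_le_mul_of_nonneg_left (hLFbound v) (by positivity)
    _ = (4 * (uu (harmMap h g w) * (‖deriv h w‖ + ‖deriv g w‖))
          * ‖deriv φ z‖) * ‖v‖ := by rw [hd]; ring
    _ ≤ (4 * M₀ / (1 - Complex.normSq z)) * ‖v‖ := by
        apply mul_le_mul_of_nonneg_right _ (norm_nonneg v)
        have hd0 : 0 ≤ uu (harmMap h g w) * (‖deriv h w‖ + ‖deriv g w‖) := by
          positivity
        rw [le_div_iff₀ hA]
        calc 4 * (uu (harmMap h g w) * (‖deriv h w‖ + ‖deriv g w‖))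
              * ‖deriv φ z‖ * (1 - Complex.normSq z)
            = 4 * ((uu (harmMap h g w) * (‖deriv h w‖ + ‖deriv g w‖))
              * (‖deriv φ z‖ * (1 - Complex.normSq z))) := by ring
          _ ≤ 4 * ((uu (harmMap h g w) * (‖deriv h w‖ + ‖deriv g w‖))
              * (1 - Complex.normSq w)) := by
              apply mul_le_mul_of_nonneg_left (mul_le_mul_of_nonneg_left hSP hd0) (by norm_num)
          _ = 4 * ((1 - Complex.normSq w) * (‖deriv h w‖ + ‖deriv g w‖)
              * uu (harmMap h g w)) := by ring
          _ ≤ 4 * M₀ := by linarith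


lemma nQuot_nonneg {h g : ℂ → ℂ} {w : ℂ} (hw : w ∈ 𝔻) : 0 ≤ nQuot h g w := by
  rw [nQuot, Complex.sq_norm, Complex.sq_norm]
  have h1 := normSq_lt_one hw
  apply div_nonneg
  · apply mul_nonneg (by linarith)
    positivity
  · have := Complex.normSq_nonneg (harmMap h g w)
    linarith

/-- Uniform Lipschitz bound for `SS ∘ f ∘ φ` on closed subdisks. -/
lemma SSf_lip (h g : ℂ → ℂ) (hh : DifferentiableOn ℂ h 𝔻) (hg : DifferentiableOn ℂ g 𝔻)
    (M₀ : ℝ) (hM : ∀ w ∈ 𝔻, nQuot h g w ≤ M₀)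
    {φ : ℂ → ℂ} (hφd : DifferentiableOn ℂ φ 𝔻) (hφm : Set.MapsTo φ 𝔻 𝔻)
    {t : ℝ} (ht : t < 1) {z w : ℂ}
    (hzb : z ∈ Metric.closedBall (0:ℂ) t) (hwb : w ∈ Metric.closedBall (0:ℂ) t) :
    ‖SS (harmMap h g (φ z)) - SS (harmMap h g (φ w))‖ ≤ (4 * M₀ / (1 - t^2)) * ‖z - w‖ := by
  classical
  have ht0 : 0 ≤ t := le_trans (norm_nonneg z) (mem_closedBall_zero_iff.1 hzb)
  have hM₀ : 0 ≤ M₀ := le_trans (nQuot_nonneg (by simpa [unitDisk] using mem_ball_self one_pos))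
    (hM 0 (by simpa [unitDisk] using mem_ball_self one_pos))
  have hsub : Metric.closedBall (0:ℂ) t ⊆ 𝔻 := fun x hx =>
    mem_ball_zero_iff.2 (lt_of_le_of_lt (mem_closedBall_zero_iff.1 hx) ht)
  have ht2 : (0:ℝ) < 1 - t^2 := by nlinarith
  set L : ℂ → (ℂ →L[ℝ] Esph) := fun x =>
    if hx : x ∈ 𝔻 then (key_deriv h g hh hg M₀ hM hφd hφm hx).choose else 0 with hL
  have hfd : ∀ x ∈ Metric.closedBall (0:ℂ) t,
      HasFDerivWithinAt (fun y => SS (harmMap h g (φ y))) (L x) (Metric.closedBall (0:ℂ) t) x := by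
    intro x hx
    have hx' : x ∈ 𝔻 := hsub hx
    rw [hL]
    simp only [dif_pos hx']
    exact (key_deriv h g hh hg M₀ hM hφd hφm hx').choose_spec.1.hasFDerivWithinAt
  have hbd : ∀ x ∈ Metric.closedBall (0:ℂ) t, ‖L x‖ ≤ 4 * M₀ / (1 - t^2) := by
    intro x hx
    have hx' : x ∈ 𝔻 := hsub hx
    have h1 : ‖L x‖ ≤ 4 * M₀ / (1 - Complex.normSq x) := by
      rw [hL]; simp only [dif_pos hx']
      exact (key_deriv h g hh hg M₀ hM hφd hφm hx').choose_spec.2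
    refine le_trans h1 ?_
    have hxx : Complex.normSq x ≤ t^2 := by
      have h2 : ‖x‖ ≤ t := mem_closedBall_zero_iff.1 hx
      have h3 : ‖x‖^2 = Complex.normSq x := by rw [← Complex.sq_norm]
      nlinarith [norm_nonneg x]
    have h4 : 1 - t^2 ≤ 1 - Complex.normSq x := by linarith
    gcongr
  exact Convex.norm_image_sub_le_of_norm_hasFDerivWithin_le hfd hbd
    (convex_closedBall (0:ℂ) t) hwb hzb

/-- Part 1 : local spherical Lipschitz estimate, uniform over automorphisms. -/
lemma part_one (h g : ℂ → ℂ) (hh : DifferentiableOn ℂ h 𝔻) (hg : DifferentiableOn ℂ g 𝔻)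
    (M₀ : ℝ) (hM : ∀ w ∈ 𝔻, nQuot h g w ≤ M₀) :
    ∀ z₁ ∈ 𝔻, ∃ r > (0 : ℝ), ∃ M > (0 : ℝ), Metric.closedBall z₁ r ⊆ 𝔻 ∧
      ∀ φ : ℂ → ℂ, IsDiskAut φ → ∀ z ∈ Metric.closedBall z₁ r,
        chordal (harmMap h g (φ z)) (harmMap h g (φ z₁)) ≤ M * ‖z - z₁‖ := by
  intro z₁ hz₁
  have hM₀ : 0 ≤ M₀ := le_trans (nQuot_nonneg hz₁) (hM z₁ hz₁)
  set M₁ := M₀ + 1 with hM₁def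
  have hM₁pos : 0 < M₁ := by linarith
  have hM1 : ∀ w ∈ 𝔻, nQuot h g w ≤ M₁ := fun w hw => le_trans (hM w hw) (by linarith)
  have hz₁n : ‖z₁‖ < 1 := mem_ball_zero_iff.1 hz₁
  set r := (1 - ‖z₁‖) / 2 with hrdef
  set t := (1 + ‖z₁‖) / 2 with htdef
  have hr : 0 < r := by
    rw [hrdef]; linarith
  have ht : t < 1 := by rw [htdef]; linarith
  have ht2 : (0:ℝ) < 1 - t^2 := by
    have ht0 : 0 ≤ t := by rw [htdef]; positivity
    nlinarith
  have hsub0 : Metric.closedBall z₁ r ⊆ Metric.closedBall (0:ℂ) t := by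
    intro x hx
    rw [mem_closedBall_zero_iff]
    have h1 : ‖x - z₁‖ ≤ r := by
      rw [← dist_eq_norm]; exact mem_closedBall.1 hx
    calc ‖x‖ = ‖x - z₁ + z₁‖ := by ring_nf
      _ ≤ ‖x - z₁‖ + ‖z₁‖ := norm_add_le _ _
      _ ≤ r + ‖z₁‖ := by linarith
      _ = t := by rw [hrdef, htdef]; ring
  have hsub : Metric.closedBall z₁ r ⊆ 𝔻 := fun x hx =>
    mem_ball_zero_iff.2 (lt_of_le_of_lt (mem_closedBall_zero_iff.1 (hsub0 hx)) ht)
  refine ⟨r, hr, 4 * M₁ / (1 - t^2), by positivity, hsub, ?_⟩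
  rintro φ ⟨hφd, hφm, -⟩ z hz
  have hz₁b : z₁ ∈ Metric.closedBall z₁ r := mem_closedBall_self hr.le
  have := SSf_lip h g hh hg M₁ hM1 hφd hφm ht (hsub0 hz) (hsub0 hz₁b)
  rw [norm_SS_sub] at this
  exact this

end Aux2


section Sphere

def ccE : Esph := isoE (0, 1/2)
def topE : Esph := isoE (0, 1)

lemma normSq_real_smul (s : ℝ) (a : ℂ) : Complex.normSq (s • a) = s^2 * Complex.normSq a := by
  simp [Complex.normSq_apply, Complex.smul_re, Complex.smul_im]; ring

lemma norm_isoE_eq (x : ℂ) (y : ℝ) :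
    ‖(isoE (x, y) : Esph)‖ = Real.sqrt (Complex.normSq x + y^2) := by
  rw [show ‖(isoE (x, y) : Esph)‖ = Real.sqrt (‖x‖^2 + ‖y‖^2) from WithLp.prod_norm_eq_of_L2 _]
  rw [Complex.sq_norm, Real.norm_eq_abs, _root_.sq_abs]

lemma norm_ccE : ‖ccE‖ = 1/2 := by
  rw [ccE, norm_isoE_eq]
  rw [show Complex.normSq 0 + (1/2:ℝ)^2 = (1/2)^2 by simp]
  exact Real.sqrt_sq (by norm_num)

lemma SS_mem_sphere (w : ℂ) : ‖SS w - ccE‖ = 1/2 := by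
  rw [SS, ccE, ← map_sub, Prod.mk_sub_mk, norm_isoE_eq]
  have h0 := one_add_normSq_pos w
  have key : Complex.normSq (uu w • w - 0) + (Complex.normSq w * uu w - 1/2)^2 = (1/2)^2 := by
    rw [sub_zero, normSq_real_smul, uu]
    field_simp
    ring
  rw [key]
  exact Real.sqrt_sq (by norm_num)

lemma norm_SS_sub_top (w : ℂ) : ‖SS w - topE‖ = 1 / Real.sqrt (1 + ‖w‖ ^ 2) := by
  rw [SS, topE, ← map_sub, Prod.mk_sub_mk, norm_isoE_eq]
  have h0 := one_add_normSq_pos w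
  have key : Complex.normSq (uu w • w - 0) + (Complex.normSq w * uu w - 1)^2
      = (1 + Complex.normSq w)⁻¹ := by
    rw [sub_zero, normSq_real_smul, uu]
    field_simp
    ring
  rw [key, Complex.sq_norm, Real.sqrt_inv, one_div]

lemma sphere_surj {p : Esph} (hp : ‖p - ccE‖ = 1/2) (hne : p ≠ topE) : ∃ z : ℂ, SS z = p := by
  set c : ℂ := (isoE.symm p).1 with hc
  set q : ℝ := (isoE.symm p).2 with hq
  have hpe : p = isoE (c, q) := by
    rw [hc, hq]
    exact (isoE.apply_symm_apply p).symm
  have hsq : Complex.normSq c + (q - 1/2)^2 = (1/2)^2 := by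
    have h1 : ‖p - ccE‖ = Real.sqrt (Complex.normSq (c - 0) + (q - 1/2)^2) := by
      rw [hpe, ccE, ← map_sub, Prod.mk_sub_mk, norm_isoE_eq]
    rw [hp] at h1
    have h2 := congrArg (fun x : ℝ => x^2) h1
    simp only [sub_zero] at h2 ⊢
    rw [Real.sq_sqrt (add_nonneg (Complex.normSq_nonneg c) (sq_nonneg _))] at h2
    exact h2.symm
  have hkey : Complex.normSq c = q - q^2 := by nlinarith [Complex.normSq_nonneg c]
  have hqle : q ≤ 1 := by nlinarith [Complex.normSq_nonneg c]
  have hqlt : q < 1 := by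
    rcases lt_or_eq_of_le hqle with h | h
    · exact h
    · exfalso
      apply hne
      have hc0 : Complex.normSq c = 0 := by rw [hkey, h]; ring
      have hcz : c = 0 := Complex.normSq_eq_zero.1 hc0
      rw [hpe, hcz, h]
      rfl
  have h1q : (0:ℝ) < 1 - q := by linarith
  refine ⟨(1 - q)⁻¹ • c, ?_⟩
  have hnz : Complex.normSq ((1 - q)⁻¹ • c) = (1-q)⁻¹^2 * (q - q^2) := by
    rw [normSq_real_smul, hkey]
  have h1plus : 1 + Complex.normSq ((1 - q)⁻¹ • c) = (1 - q)⁻¹ := by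
    rw [hnz]
    field_simp
    ring
  have huz : uu ((1 - q)⁻¹ • c) = 1 - q := by
    rw [uu, h1plus, inv_inv]
  rw [SS, hpe]
  congr 1
  refine Prod.ext ?_ ?_
  · show uu ((1 - q)⁻¹ • c) • ((1 - q)⁻¹ • c) = c
    rw [huz, smul_smul, mul_inv_cancel₀ (ne_of_gt h1q), one_smul]
  · show Complex.normSq ((1 - q)⁻¹ • c) * uu ((1 - q)⁻¹ • c) = q
    rw [huz, hnz]
    field_simp

/-- Extension of `SS` to the sphere `Option ℂ`. -/
def SOpt : Option ℂ → Esph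
  | Option.some w => SS w
  | Option.none => topE

lemma chordalO_eq_norm (w : ℂ) (o : Option ℂ) :
    chordalO (Option.some w) o = ‖SS w - SOpt o‖ := by
  cases o with
  | some v => rw [chordalO, SOpt]; exact (norm_SS_sub w v).symm
  | none => rw [chordalO, SOpt]; exact (norm_SS_sub_top w).symm

end Sphere


section PartTwo

lemma zero_mem_disk : (0:ℂ) ∈ 𝔻 := by
  have : (0:ℂ) ∈ Metric.ball (0:ℂ) 1 := mem_ball_self one_pos
  exact this

/-- Part 2 : normal family. -/
lemma part_two (h g : ℂ → ℂ) (hh : DifferentiableOn ℂ h 𝔻) (hg : DifferentiableOn ℂ g 𝔻)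
    (M₀ : ℝ) (hM : ∀ w ∈ 𝔻, nQuot h g w ≤ M₀) :
    ∀ φ : ℕ → ℂ → ℂ, (∀ n, IsDiskAut (φ n)) →
      ∃ s : ℕ → ℕ, StrictMono s ∧ ∃ F₀ : ℂ → Option ℂ,
        ∀ K ⊆ 𝔻, IsCompact K → ∀ ε > (0 : ℝ), ∀ᶠ n in Filter.atTop,
          ∀ z ∈ K, chordalO (Option.some (harmMap h g (φ (s n) z))) (F₀ z) < ε := by
  classical
  intro φ hφ
  have hM₀ : 0 ≤ M₀ := le_trans (nQuot_nonneg zero_mem_disk) (hM 0 zero_mem_disk)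
  set G : ℕ → ℂ → Esph := fun n z => SS (harmMap h g (φ n z)) with hGdef
  have hGlip : ∀ n, ∀ t : ℝ, t < 1 → ∀ z w : ℂ,
      z ∈ Metric.closedBall (0:ℂ) t → w ∈ Metric.closedBall (0:ℂ) t →
      ‖G n z - G n w‖ ≤ (4 * M₀ / (1 - t^2)) * ‖z - w‖ := fun n t ht z w hz hw =>
    SSf_lip h g hh hg M₀ hM (hφ n).1 (hφ n).2.1 ht hz hw
  have hGball : ∀ n z, G n z ∈ Metric.closedBall (0 : Esph) 1 := by
    intro n z
    rw [mem_closedBall_zero_iff]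
    calc ‖G n z‖ = ‖(G n z - ccE) + ccE‖ := by rw [sub_add_cancel]
      _ ≤ ‖G n z - ccE‖ + ‖ccE‖ := norm_add_le _ _
      _ = 1/2 + 1/2 := by rw [SS_mem_sphere, norm_ccE]
      _ = 1 := by norm_num
  set q : ℕ → ℂ := TopologicalSpace.denseSeq ℂ with hqdef
  have hq : DenseRange q := TopologicalSpace.denseRange_denseSeq ℂ
  set V : ℕ → (∀ _ : ℕ, Esph) := fun n k => G n (q k) with hVdef
  have hC : IsCompact {x : ∀ _ : ℕ, Esph | ∀ k, x k ∈ Metric.closedBall (0 : Esph) 1} :=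
    isCompact_pi_infinite (fun _ => isCompact_closedBall _ _)
  obtain ⟨ℓ, hℓ, s, hsmono, hconv⟩ := hC.tendsto_subseq (x := V) (fun n k => hGball n (q k))
  have hk : ∀ k, Filter.Tendsto (fun n => G (s n) (q k)) Filter.atTop (nhds (ℓ k)) := by
    intro k
    exact tendsto_pi_nhds.1 hconv k
  -- pointwise Cauchy on 𝔻
  have hcauchy : ∀ z ∈ 𝔻, CauchySeq (fun n => G (s n) z) := by
    intro z hz
    rw [Metric.cauchySeq_iff]
    intro ε hε
    have hzn : ‖z‖ < 1 := mem_ball_zero_iff.1 hz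
    set t : ℝ := (1 + ‖z‖)/2 with htdef
    have htt : t < 1 := by rw [htdef]; linarith
    have ht0 : 0 ≤ t := by rw [htdef]; positivity
    have ht2 : (0:ℝ) < 1 - t^2 := by nlinarith
    set C1 : ℝ := 4*M₀/(1-t^2) + 1 with hC1def
    have hC1 : 0 < C1 := by rw [hC1def]; positivity
    have hCleC1 : 4*M₀/(1-t^2) ≤ C1 := by rw [hC1def]; linarith
    set δ : ℝ := min ((1 - ‖z‖)/2) (ε/(4*C1)) with hδdef
    have hδpos : 0 < δ := lt_min (by linarith) (by positivity)
    obtain ⟨k, hkd⟩ := Metric.denseRange_iff.1 hq z δ hδpos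
    have hdzk : ‖z - q k‖ < δ := by rwa [← dist_eq_norm]
    have hz_mem : z ∈ Metric.closedBall (0:ℂ) t := by
      rw [mem_closedBall_zero_iff, htdef]; linarith
    have hqk_mem : q k ∈ Metric.closedBall (0:ℂ) t := by
      rw [mem_closedBall_zero_iff]
      have h1 : ‖q k‖ ≤ ‖z‖ + ‖q k - z‖ := by
        calc ‖q k‖ = ‖z + (q k - z)‖ := by ring_nf
          _ ≤ ‖z‖ + ‖q k - z‖ := norm_add_le _ _
      have h2 : ‖q k - z‖ < (1 - ‖z‖)/2 := by
        rw [norm_sub_rev]; exact lt_of_lt_of_le hdzk (min_le_left _ _)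
      rw [htdef]; linarith
    have hCd : ∀ m, ‖G (s m) z - G (s m) (q k)‖ ≤ ε/4 := by
      intro m
      calc ‖G (s m) z - G (s m) (q k)‖ ≤ (4 * M₀ / (1 - t^2)) * ‖z - q k‖ :=
            hGlip (s m) t htt z (q k) hz_mem hqk_mem
        _ ≤ C1 * δ := mul_le_mul hCleC1 hdzk.le (norm_nonneg _) hC1.le
        _ ≤ C1 * (ε/(4*C1)) := mul_le_mul_of_nonneg_left (min_le_right _ _) hC1.le
        _ = ε/4 := by field_simp
    obtain ⟨N, hN⟩ := Metric.cauchySeq_iff.1 (hk k).cauchySeq (ε/4) (by positivity)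
    refine ⟨N, fun m hm n hn => ?_⟩
    have tri : dist (G (s m) z) (G (s n) z)
        ≤ dist (G (s m) z) (G (s m) (q k)) + dist (G (s m) (q k)) (G (s n) (q k))
          + dist (G (s n) (q k)) (G (s n) z) := dist_triangle4 _ _ _ _
    have t1 : dist (G (s m) z) (G (s m) (q k)) ≤ ε/4 := by rw [dist_eq_norm]; exact hCd m
    have t2 : dist (G (s m) (q k)) (G (s n) (q k)) < ε/4 := hN m hm n hn
    have t3 : dist (G (s n) (q k)) (G (s n) z) ≤ ε/4 := by
      rw [dist_eq_norm, norm_sub_rev]; exact hCd n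
    calc dist (G (s m) z) (G (s n) z) ≤ _ := tri
      _ < ε := by linarith
  -- the limit function
  set Ginf : ℂ → Esph := fun z =>
    if hz : z ∈ 𝔻 then (cauchySeq_tendsto_of_complete (hcauchy z hz)).choose else topE
    with hGinfdef
  have hGinf : ∀ z, z ∈ 𝔻 → Filter.Tendsto (fun n => G (s n) z) Filter.atTop (nhds (Ginf z)) := by
    intro z hz
    rw [hGinfdef]
    simp only [dif_pos hz]
    exact (cauchySeq_tendsto_of_complete (hcauchy z hz)).choose_spec
  have hsphere : ∀ z ∈ 𝔻, ‖Ginf z - ccE‖ = 1/2 := by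
    intro z hz
    have h1 : Filter.Tendsto (fun n => ‖G (s n) z - ccE‖) Filter.atTop (nhds ‖Ginf z - ccE‖) :=
      ((hGinf z hz).sub tendsto_const_nhds).norm
    have h2 : (fun n => ‖G (s n) z - ccE‖) = fun _ => 1/2 :=
      funext fun n => SS_mem_sphere _
    rw [h2] at h1
    exact tendsto_nhds_unique h1 tendsto_const_nhds
  set F₀ : ℂ → Option ℂ := fun z =>
    if hx : ∃ c : ℂ, SS c = Ginf z then Option.some hx.choose else Option.none with hF₀def
  have hSOpt : ∀ z ∈ 𝔻, SOpt (F₀ z) = Ginf z := by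
    intro z hz
    rw [hF₀def]
    by_cases hx : ∃ c : ℂ, SS c = Ginf z
    · simp only [dif_pos hx]
      exact hx.choose_spec
    · simp only [dif_neg hx]
      show topE = Ginf z
      by_contra hne
      exact hx (sphere_surj (hsphere z hz) (fun hcon => hne hcon.symm))
  refine ⟨s, hsmono, F₀, ?_⟩
  intro K hK hKc ε hε
  rcases K.eq_empty_or_nonempty with rfl | hKne
  · exact Filter.Eventually.of_forall (fun n z hz => absurd hz (notMem_empty z))
  obtain ⟨z₀, hz₀K, hz₀max⟩ := hKc.exists_isMaxOn hKne continuous_norm.continuousOn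
  set t₀ : ℝ := ‖z₀‖ with ht₀def
  have ht₀ : t₀ < 1 := mem_ball_zero_iff.1 (hK hz₀K)
  have ht₀0 : 0 ≤ t₀ := norm_nonneg _
  set t : ℝ := (1 + t₀)/2 with htdef
  have htt : t < 1 := by rw [htdef]; linarith
  have ht0 : 0 ≤ t := by rw [htdef]; positivity
  have ht2 : (0:ℝ) < 1 - t^2 := by nlinarith
  set C1 : ℝ := 4*M₀/(1-t^2) + 1 with hC1def
  have hC1 : 0 < C1 := by rw [hC1def]; positivity
  have hCleC1 : 4*M₀/(1-t^2) ≤ C1 := by rw [hC1def]; linarith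
  set δ : ℝ := min ((1 - t₀)/2) (ε/(4*C1)) with hδdef
  have hδpos : 0 < δ := lt_min (by linarith) (by positivity)
  have hcover : K ⊆ ⋃ k : ℕ, Metric.ball (q k) δ := by
    intro z hzK
    obtain ⟨k, hk'⟩ := Metric.denseRange_iff.1 hq z δ hδpos
    exact mem_iUnion.2 ⟨k, by rwa [mem_ball]⟩
  obtain ⟨Fs, hFs⟩ := hKc.elim_finite_subcover (fun k => Metric.ball (q k) δ)
    (fun _ => isOpen_ball) hcover
  have hev : ∀ᶠ n in Filter.atTop, ∀ k ∈ Fs, dist (G (s n) (q k)) (ℓ k) < ε/4 := by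
    rw [Filter.eventually_all_finset]
    intro k _
    have h1 := (hk k)
    rw [Metric.tendsto_atTop] at h1
    obtain ⟨N, hN⟩ := h1 (ε/4) (by positivity)
    exact Filter.eventually_atTop.2 ⟨N, fun n hn => hN n hn⟩
  filter_upwards [hev] with n hn z hzK
  have hzU := hFs hzK
  rw [mem_iUnion₂] at hzU
  obtain ⟨k, hkF, hzk⟩ := hzU
  have hzt0 : ‖z‖ ≤ t₀ := hz₀max hzK
  have hz_mem : z ∈ Metric.closedBall (0:ℂ) t := by
    rw [mem_closedBall_zero_iff, htdef]; linarith
  have hdzk : ‖z - q k‖ < δ := by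
    rw [← dist_eq_norm]; exact mem_ball.1 hzk
  have hqk_mem : q k ∈ Metric.closedBall (0:ℂ) t := by
    rw [mem_closedBall_zero_iff]
    have h1 : ‖q k‖ ≤ ‖z‖ + ‖q k - z‖ := by
      calc ‖q k‖ = ‖z + (q k - z)‖ := by ring_nf
        _ ≤ ‖z‖ + ‖q k - z‖ := norm_add_le _ _
    have h2 : ‖q k - z‖ < (1 - t₀)/2 := by
      rw [norm_sub_rev]; exact lt_of_lt_of_le hdzk (min_le_left _ _)
    rw [htdef]; linarith
  have hzD : z ∈ 𝔻 := hK hzK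
  have hCd : ∀ m, ‖G (s m) z - G (s m) (q k)‖ ≤ ε/4 := by
    intro m
    calc ‖G (s m) z - G (s m) (q k)‖ ≤ (4 * M₀ / (1 - t^2)) * ‖z - q k‖ :=
          hGlip (s m) t htt z (q k) hz_mem hqk_mem
      _ ≤ C1 * δ := mul_le_mul hCleC1 hdzk.le (norm_nonneg _) hC1.le
      _ ≤ C1 * (ε/(4*C1)) := mul_le_mul_of_nonneg_left (min_le_right _ _) hC1.le
      _ = ε/4 := by field_simp
  have e1 : ‖G (s n) z - G (s n) (q k)‖ ≤ ε/4 := hCd n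
  have e2 : ‖G (s n) (q k) - ℓ k‖ < ε/4 := by
    rw [← dist_eq_norm]; exact hn k hkF
  have e3 : ‖ℓ k - Ginf z‖ ≤ ε/4 := by
    have htend : Filter.Tendsto (fun m => ‖G (s m) (q k) - G (s m) z‖) Filter.atTop
        (nhds ‖ℓ k - Ginf z‖) := ((hk k).sub (hGinf z hzD)).norm
    refine le_of_tendsto htend (Filter.Eventually.of_forall fun m => ?_)
    rw [norm_sub_rev]
    exact hCd m
  have goal_eq : chordalO (Option.some (harmMap h g (φ (s n) z))) (F₀ z)
      = ‖G (s n) z - Ginf z‖ := by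
    rw [chordalO_eq_norm, hSOpt z hzD]
  rw [goal_eq]
  have tri : dist (G (s n) z) (Ginf z)
      ≤ dist (G (s n) z) (G (s n) (q k)) + dist (G (s n) (q k)) (ℓ k)
        + dist (ℓ k) (Ginf z) := dist_triangle4 _ _ _ _
  rw [dist_eq_norm, dist_eq_norm, dist_eq_norm, dist_eq_norm] at tri
  calc ‖G (s n) z - Ginf z‖ ≤ _ := tri
    _ < ε := by linarith

end PartTwo

theorem normal_family_of_normal (h g : ℂ → ℂ)
    (hh : DifferentiableOn ℂ h 𝔻) (hg : DifferentiableOn ℂ g 𝔻)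
    (hf : harmNorm h g < ⊤) :
    (∀ z₁ ∈ 𝔻, ∃ r > (0 : ℝ), ∃ M > (0 : ℝ), Metric.closedBall z₁ r ⊆ 𝔻 ∧
      ∀ φ : ℂ → ℂ, IsDiskAut φ → ∀ z ∈ Metric.closedBall z₁ r,
        chordal (harmMap h g (φ z)) (harmMap h g (φ z₁)) ≤ M * ‖z - z₁‖) ∧
    (∀ φ : ℕ → ℂ → ℂ, (∀ n, IsDiskAut (φ n)) →
      ∃ s : ℕ → ℕ, StrictMono s ∧ ∃ F₀ : ℂ → Option ℂ,
        ∀ K ⊆ 𝔻, IsCompact K → ∀ ε > (0 : ℝ), ∀ᶠ n in Filter.atTop,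
          ∀ z ∈ K, chordalO (Option.some (harmMap h g (φ (s n) z))) (F₀ z) < ε) := by
  set M₀ := (harmNorm h g).toReal with hM₀def
  have hM : ∀ w ∈ 𝔻, nQuot h g w ≤ M₀ := by
    intro w hw
    have h1 : ENNReal.ofReal (nQuot h g w) ≤ harmNorm h g :=
      le_iSup₂ (f := fun z (_ : z ∈ 𝔻) => ENNReal.ofReal (nQuot h g z)) w hw
    have h2 := ENNReal.toReal_mono hf.ne h1
    rwa [ENNReal.toReal_ofReal (nQuot_nonneg hw)] at h2
  exact ⟨part_one h g hh hg M₀ hM, part_two h g hh hg M₀ hM⟩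
end
end
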